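/- In C[S_n\S_{α+n}/S_n], for distinct i, j ≤ α one has θ_j·θ_i = θ_{ij} + a((i j))·θ_j, where θ_{ij} := (1/n!)·Σ_{g ∈ S_n T_{ij} S_n} δ_g and T_{ij} is any permutation in S_{α+n} whose α-corner is the partial identity vanishing at i and j. -/

import Mathlib

open Equiv

noncomputable section

/-- The subgroup `S_n ⊆ S_{α+n}` of permutations fixing `{1,…,α}` pointwise. -/
def fixFirst (α n : ℕ) : Subgroup (Perm (Fin (α + n))) :=
  fixingSubgroup (Perm (Fin (α + n))) {i : Fin (α + n) | (i : ℕ) < α}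

/-- The double coset `S_n · t · S_n` in `S_{α+n}`, as a finset. -/
def dcos (α n : ℕ) (t : Perm (Fin (α + n))) : Finset (Perm (Fin (α + n))) :=
  (Set.toFinite {h | ∃ k₁ ∈ fixFirst α n, ∃ k₂ ∈ fixFirst α n, h = k₁ * t * k₂}).toFinset

/-- `(1/n!)·Σ_{h ∈ S_n t S_n} δ_h` in the group algebra `C[S_{α+n}]`. -/
def dosetElt (α n : ℕ) (t : Perm (Fin (α + n))) : MonoidAlgebra ℂ (Perm (Fin (α + n))) :=
  ((Nat.factorial n : ℂ))⁻¹ • ∑ h ∈ dcos α n t, MonoidAlgebra.single h 1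

/-- `θ_i = (1/n!)·Σ_{h ∈ S_n (i,α+1) S_n} δ_h`, where `(i, α+1)` is the
transposition of `i ≤ α` with `α+1` (0-based: of `i < α` with `α`). -/
def theta (α n : ℕ) (hn : 0 < n) (i : Fin α) : MonoidAlgebra ℂ (Perm (Fin (α + n))) :=
  dosetElt α n (Equiv.swap (Fin.castAdd n i) ⟨α, by omega⟩)

/-- `a(g) = (1/n!)·Σ_{σ ∈ S_n} δ_{gσ}` for `g ∈ S_α ⊆ S_{α+n}`. -/
def aElt (α n : ℕ) (g : Perm (Fin α)) : MonoidAlgebra ℂ (Perm (Fin (α + n))) :=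
  ((Nat.factorial n : ℂ))⁻¹ • ∑ σ ∈ (Set.toFinite (fixFirst α n : Set (Perm (Fin (α + n))))).toFinset,
    MonoidAlgebra.single (Perm.viaFintypeEmbedding g (Fin.castAddEmb n) * σ) 1

/-- The unit `(1/n!)·Σ_{k ∈ S_n} δ_k` of the double coset algebra. -/
def unitK (α n : ℕ) : MonoidAlgebra ℂ (Perm (Fin (α + n))) :=
  ((Nat.factorial n : ℂ))⁻¹ • ∑ σ ∈ (Set.toFinite (fixFirst α n : Set (Perm (Fin (α + n))))).toFinset,
    MonoidAlgebra.single σ 1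

end

section Aux

open MonoidAlgebra Finset
open scoped Classical

variable (α n : ℕ)

/-- The finset of the subgroup `K`. -/
noncomputable def Kf : Finset (Perm (Fin (α + n))) :=
  (Set.toFinite (fixFirst α n : Set (Perm (Fin (α + n))))).toFinset

lemma mem_Kf {g : Perm (Fin (α + n))} : g ∈ Kf α n ↔ ∀ x : Fin (α + n), (x : ℕ) < α → g x = x := by
  rw [Kf, Set.Finite.mem_toFinset, SetLike.mem_coe, fixFirst, mem_fixingSubgroup_iff]
  constructor
  · intro h x hx; exact h x hx
  · intro h x hx; exact h x hx

/-- Cardinality of a "fix the first β" subgroup of `Perm (Fin m)`. -/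
lemma card_fixLt (m β : ℕ) :
    Nat.card (fixingSubgroup (Perm (Fin m)) {x : Fin m | (x:ℕ) < β}) = (m - β).factorial := by
  have hsub : Fintype.card {x : Fin m // β ≤ (x:ℕ)} = m - β := by
    have e : {x : Fin m // β ≤ (x:ℕ)} ≃ Fin (m - β) :=
      { toFun := fun x => ⟨(x:Fin m) - β, by omega⟩
        invFun := fun y => ⟨⟨β + y, by omega⟩, by simp⟩
        left_inv := fun x => by ext; simp; omega
        right_inv := fun y => by ext; simp }
    rw [Fintype.card_congr e, Fintype.card_fin]
  have e1 : Perm {x : Fin m // β ≤ (x:ℕ)} ≃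
      {f : Perm (Fin m) // ∀ x : Fin m, ¬ β ≤ (x:ℕ) → f x = x} :=
    Perm.subtypeEquivSubtypePerm (fun x : Fin m => β ≤ (x:ℕ))
  have e2 : {f : Perm (Fin m) // ∀ x : Fin m, ¬ β ≤ (x:ℕ) → f x = x} ≃
      (fixingSubgroup (Perm (Fin m)) {x : Fin m | (x:ℕ) < β}) := by
    apply Equiv.subtypeEquivRight
    intro f
    rw [mem_fixingSubgroup_iff]
    constructor
    · intro h x hx
      have hx' : (x:ℕ) < β := hx
      exact h x (by omega)
    · intro h x hx
      exact h x (show (x:ℕ) < β by omega)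
  rw [← Nat.card_congr (e1.trans e2), Nat.card_eq_fintype_card, Fintype.card_perm, hsub]

lemma card_finite_toFinset {m : ℕ} (H : Subgroup (Perm (Fin m))) :
    (Set.toFinite (H : Set (Perm (Fin m)))).toFinset.card = Nat.card H := by
  rw [← Nat.card_eq_card_finite_toFinset]
  rfl

lemma card_Kf : (Kf α n).card = n.factorial := by
  rw [Kf, card_finite_toFinset, fixFirst, card_fixLt]
  congr 1
  omega

/-- δ of an element of `K` is absorbed by `unitK` on the right. -/
lemma mem_Kf_iff {g : Perm (Fin (α + n))} : g ∈ Kf α n ↔ g ∈ fixFirst α n := by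
  rw [Kf, Set.Finite.mem_toFinset, SetLike.mem_coe]

lemma single_mul_unitK {k : Perm (Fin (α + n))} (hk : k ∈ Kf α n) :
    MonoidAlgebra.single k (1:ℂ) * unitK α n = unitK α n := by
  rw [mem_Kf_iff] at hk
  rw [unitK, mul_smul_comm, Finset.mul_sum]
  congr 1
  rw [show (Set.toFinite (fixFirst α n : Set (Perm (Fin (α + n))))).toFinset = Kf α n from rfl]
  refine Finset.sum_equiv (Equiv.mulLeft k) ?_ ?_
  · intro σ
    rw [mem_Kf_iff, mem_Kf_iff]
    exact ⟨fun h => (fixFirst α n).mul_mem hk h, fun h => by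
      simpa using (fixFirst α n).mul_mem ((fixFirst α n).inv_mem hk) h⟩
  · intro σ hσ
    rw [MonoidAlgebra.single_mul_single, one_mul]
    rfl

lemma unitK_mul_single {k : Perm (Fin (α + n))} (hk : k ∈ Kf α n) :
    unitK α n * MonoidAlgebra.single k (1:ℂ) = unitK α n := by
  rw [mem_Kf_iff] at hk
  rw [unitK, smul_mul_assoc, Finset.sum_mul]
  congr 1
  rw [show (Set.toFinite (fixFirst α n : Set (Perm (Fin (α + n))))).toFinset = Kf α n from rfl]
  refine Finset.sum_equiv (Equiv.mulRight k) ?_ ?_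
  · intro σ
    rw [mem_Kf_iff, mem_Kf_iff]
    exact ⟨fun h => (fixFirst α n).mul_mem h hk, fun h => by
      simpa using (fixFirst α n).mul_mem h ((fixFirst α n).inv_mem hk)⟩
  · intro σ hσ
    rw [MonoidAlgebra.single_mul_single, one_mul]
    rfl

lemma hnfac : ((n.factorial : ℂ)) ≠ 0 := by
  exact_mod_cast Nat.cast_ne_zero.mpr (Nat.factorial_ne_zero n)

lemma unitK_sq : unitK α n * unitK α n = unitK α n := by
  nth_rewrite 1 [unitK]
  rw [smul_mul_assoc, Finset.sum_mul]
  rw [show (Set.toFinite (fixFirst α n : Set (Perm (Fin (α + n))))).toFinset = Kf α n from rfl]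
  rw [Finset.sum_congr rfl (fun k hk => single_mul_unitK α n hk), Finset.sum_const, card_Kf,
    ← Nat.cast_smul_eq_nsmul ℂ, smul_smul, inv_mul_cancel₀ (hnfac n), one_smul]

/-- `u δ_g u = u δ_t u` when `g ∈ K t K`. -/
lemma sandwich_eq {g t : Perm (Fin (α + n))} (k₁ k₂ : Perm (Fin (α + n)))
    (h₁ : k₁ ∈ Kf α n) (h₂ : k₂ ∈ Kf α n) (h : g = k₁ * t * k₂) :
    unitK α n * MonoidAlgebra.single g (1:ℂ) * unitK α n =
      unitK α n * MonoidAlgebra.single t (1:ℂ) * unitK α n := by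
  subst h
  rw [show MonoidAlgebra.single (k₁ * t * k₂) (1:ℂ)
      = MonoidAlgebra.single k₁ (1:ℂ) * MonoidAlgebra.single t 1 * MonoidAlgebra.single k₂ 1 by
    rw [MonoidAlgebra.single_mul_single, MonoidAlgebra.single_mul_single]; ring_nf]
  calc unitK α n * (MonoidAlgebra.single k₁ (1:ℂ) * MonoidAlgebra.single t 1 *
        MonoidAlgebra.single k₂ 1) * unitK α n
      = (unitK α n * MonoidAlgebra.single k₁ (1:ℂ)) * MonoidAlgebra.single t 1 *
        (MonoidAlgebra.single k₂ (1:ℂ) * unitK α n) := by simp only [mul_assoc]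
    _ = unitK α n * MonoidAlgebra.single t (1:ℂ) * unitK α n := by
        rw [unitK_mul_single α n h₁, single_mul_unitK α n h₂]

/-- `dosetElt t` in terms of the sandwich. -/
lemma dosetElt_eq (t : Perm (Fin (α + n))) :
    unitK α n * MonoidAlgebra.single t (1:ℂ) * unitK α n =
      (((Kf α n).filter (fun c => t⁻¹ * c * t ∈ fixFirst α n)).card / n.factorial : ℂ) •
        dosetElt α n t := by
  set m := ((Kf α n).filter (fun c => t⁻¹ * c * t ∈ fixFirst α n)).card with hm
  have hmem_dcos : ∀ h, h ∈ dcos α n t ↔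
      ∃ k₁ ∈ fixFirst α n, ∃ k₂ ∈ fixFirst α n, h = k₁ * t * k₂ := by
    intro h
    rw [dcos, Set.Finite.mem_toFinset, Set.mem_setOf_eq]
  -- step 1 : expand
  have step1 : unitK α n * MonoidAlgebra.single t (1:ℂ) * unitK α n =
      ((n.factorial : ℂ))⁻¹ • ((n.factorial : ℂ))⁻¹ •
        ∑ p ∈ (Kf α n) ×ˢ (Kf α n), MonoidAlgebra.single (p.1 * t * p.2) (1:ℂ) := by
    rw [unitK, smul_mul_assoc, smul_mul_assoc, mul_smul_comm]
    congr 1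
    congr 1
    rw [Finset.sum_mul, Finset.sum_mul_sum, Finset.sum_product]
    refine Finset.sum_congr rfl (fun k₁ hk₁ => Finset.sum_congr rfl (fun k₂ hk₂ => ?_))
    rw [MonoidAlgebra.single_mul_single, MonoidAlgebra.single_mul_single, one_mul, one_mul]
  -- step 2 : fiberwise
  have hmaps : ∀ p ∈ (Kf α n) ×ˢ (Kf α n), p.1 * t * p.2 ∈ dcos α n t := by
    intro p hp
    rw [Finset.mem_product] at hp
    rw [hmem_dcos]
    exact ⟨p.1, (mem_Kf_iff α n).mp hp.1, p.2, (mem_Kf_iff α n).mp hp.2, rfl⟩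
  have step2 : ∑ p ∈ (Kf α n) ×ˢ (Kf α n), MonoidAlgebra.single (p.1 * t * p.2) (1:ℂ) =
      ∑ h ∈ dcos α n t, m • MonoidAlgebra.single h (1:ℂ) := by
    rw [← Finset.sum_fiberwise_of_maps_to hmaps
      (fun p => MonoidAlgebra.single (p.1 * t * p.2) (1:ℂ))]
    refine Finset.sum_congr rfl (fun h hh => ?_)
    have hcard : (((Kf α n) ×ˢ (Kf α n)).filter (fun p => p.1 * t * p.2 = h)).card = m := by
      obtain ⟨k₁, hk₁, k₂, hk₂, rfl⟩ := (hmem_dcos h).mp hh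
      rw [hm]
      refine Finset.card_bij' (fun p _ => k₁⁻¹ * p.1) (fun c _ => (k₁ * c, t⁻¹ * c⁻¹ * t * k₂))
        ?_ ?_ ?_ ?_
      · intro p hp
        rw [Finset.mem_filter, Finset.mem_product] at hp
        obtain ⟨⟨h1, h2⟩, heq⟩ := hp
        rw [Finset.mem_filter]
        constructor
        · rw [mem_Kf_iff]
          exact (fixFirst α n).mul_mem ((fixFirst α n).inv_mem hk₁)
            ((mem_Kf_iff α n).mp h1)
        · have heq2 : t⁻¹ * (k₁⁻¹ * p.1) * t = k₂ * p.2⁻¹ := by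
            have h := congrArg (fun x => t⁻¹ * k₁⁻¹ * x * p.2⁻¹) heq
            simpa [mul_assoc] using h
          rw [heq2]
          exact (fixFirst α n).mul_mem hk₂
            ((fixFirst α n).inv_mem ((mem_Kf_iff α n).mp h2))
      · intro c hc
        rw [Finset.mem_filter] at hc
        obtain ⟨h1, h2⟩ := hc
        rw [Finset.mem_filter, Finset.mem_product]
        refine ⟨⟨?_, ?_⟩, by group⟩
        · rw [mem_Kf_iff]
          exact (fixFirst α n).mul_mem hk₁ ((mem_Kf_iff α n).mp h1)
        · rw [mem_Kf_iff]
          exact (fixFirst α n).mul_mem ((fixFirst α n).inv_mem h2) hk₂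
      · intro p hp
        rw [Finset.mem_filter, Finset.mem_product] at hp
        obtain ⟨⟨h1, h2⟩, heq⟩ := hp
        have h2' : p.2 = (t⁻¹ * (k₁⁻¹ * p.1)⁻¹ * t * k₂ : Perm (Fin (α+n))) := by
          have h := congrArg (fun x => t⁻¹ * p.1⁻¹ * x) heq
          simp only [mul_assoc] at h ⊢
          simp only [mul_inv_rev, inv_inv, mul_assoc]
          rw [← h]
          simp [← mul_assoc]
        refine Prod.ext ?_ h2'.symm
        simp [← mul_assoc]
      · intro c hc
        simp [mul_assoc]
    rw [Finset.sum_congr rfl (fun p hp => ?_), Finset.sum_const, hcard]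
    rw [Finset.mem_filter] at hp
    rw [hp.2]
  rw [step1, step2]
  simp only [← Nat.cast_smul_eq_nsmul ℂ]
  rw [← Finset.smul_sum, dosetElt, smul_smul, smul_smul, smul_smul]
  congr 1
  field_simp

lemma mem_fixFirst {g : Perm (Fin (α + n))} :
    g ∈ fixFirst α n ↔ ∀ x : Fin (α + n), (x : ℕ) < α → g x = x := by
  rw [← mem_Kf_iff, mem_Kf]

lemma filter_conj_card (t : Perm (Fin (α + n))) (β : ℕ) (hβ1 : α ≤ β)
    (H : ∀ c : Perm (Fin (α + n)), c ∈ fixFirst α n →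
        ((∀ x : Fin (α+n), (x:ℕ) < α → c (t x) = t x) ↔
          (∀ x : Fin (α+n), (x:ℕ) < β → c x = x))) :
    ((Kf α n).filter (fun c => t⁻¹ * c * t ∈ fixFirst α n)).card
      = (α + n - β).factorial := by
  have hset : (Kf α n).filter (fun c => t⁻¹ * c * t ∈ fixFirst α n)
      = (Set.toFinite ((fixingSubgroup (Perm (Fin (α+n)))
          {x : Fin (α+n) | (x:ℕ) < β} : Subgroup _) : Set _)).toFinset := by
    ext c
    rw [Finset.mem_filter, Set.Finite.mem_toFinset, SetLike.mem_coe, mem_fixingSubgroup_iff]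
    constructor
    · rintro ⟨h1, h2⟩ x hx
      have hx' : (x:ℕ) < β := hx
      have hKc : c ∈ fixFirst α n := (mem_Kf_iff α n).mp h1
      refine (H c hKc).mp ?_ x hx'
      intro y hy
      have h3 : (t⁻¹ * c * t) y = y := by
        rw [mem_fixFirst] at h2
        exact h2 y hy
      have h4 := congrArg t h3
      simpa [Perm.mul_apply] using h4
    · intro h
      have hKc : c ∈ fixFirst α n := by
        rw [mem_fixFirst]
        intro x hx
        exact h x (show x ∈ {x : Fin (α+n) | (x:ℕ) < β} from by
          simp only [Set.mem_setOf_eq]; omega)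
      refine ⟨(mem_Kf_iff α n).mpr hKc, ?_⟩
      rw [mem_fixFirst]
      intro y hy
      have h5 : c (t y) = t y := (H c hKc).mpr (fun x hx => h x hx) y hy
      simp [Perm.mul_apply, h5]
  rw [hset, card_finite_toFinset, card_fixLt]

end Aux

section Spec

open MonoidAlgebra Finset
open scoped Classical

variable {α n : ℕ}

lemma val_castAdd (x : Fin α) : ((Fin.castAdd n x : Fin (α + n)) : ℕ) = (x : ℕ) := rfl

lemma ltA (hn : 2 ≤ n) : α < α + n := by omega

lemma ltA1 (hn : 2 ≤ n) : α + 1 < α + n := by omega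

lemma m_tj (hn : 2 ≤ n) (j : Fin α) :
    ((Kf α n).filter (fun c =>
        (Equiv.swap (Fin.castAdd n j) (⟨α, ltA hn⟩ : Fin (α+n)))⁻¹ * c *
          Equiv.swap (Fin.castAdd n j) ⟨α, ltA hn⟩ ∈ fixFirst α n)).card
      = (n-1).factorial := by
  set a0 : Fin (α+n) := ⟨α, ltA hn⟩ with ha0
  set cj : Fin (α+n) := Fin.castAdd n j with hcj
  have key := filter_conj_card α n (Equiv.swap cj a0) (α+1) (by omega) ?_
  · rw [key]
    congr 1
    omega
  · intro c hc
    rw [mem_fixFirst] at hc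
    constructor
    · intro h x hx
      rcases Nat.lt_or_ge (x:ℕ) α with hxa | hxa
      · exact hc x hxa
      · have hxe : x = a0 := by
          apply Fin.ext
          simp only [ha0]
          omega
        have hj := h cj (by simp [hcj, val_castAdd])
        rw [Equiv.swap_apply_left] at hj
        rw [hxe]
        exact hj
    · intro h x hx
      by_cases hx2 : x = cj
      · rw [hx2, Equiv.swap_apply_left]
        exact h a0 (by simp [ha0])
      · rw [Equiv.swap_apply_of_ne_of_ne hx2 (by
          intro he
          rw [he] at hx
          simp only [ha0] at hx
          omega)]
        exact h x (by omega)

lemma m_T (hn : 2 ≤ n) (i j : Fin α) (hij : i ≠ j) :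
    ((Kf α n).filter (fun c =>
        (Equiv.swap (Fin.castAdd n i) (⟨α, ltA hn⟩ : Fin (α+n)) *
          Equiv.swap (Fin.castAdd n j) ⟨α + 1, ltA1 hn⟩)⁻¹ * c *
          (Equiv.swap (Fin.castAdd n i) ⟨α, ltA hn⟩ *
            Equiv.swap (Fin.castAdd n j) ⟨α + 1, ltA1 hn⟩) ∈ fixFirst α n)).card
      = (n-2).factorial := by
  set a0 : Fin (α+n) := ⟨α, ltA hn⟩ with ha0
  set a1 : Fin (α+n) := ⟨α+1, ltA1 hn⟩ with ha1
  set ci : Fin (α+n) := Fin.castAdd n i with hci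
  set cj : Fin (α+n) := Fin.castAdd n j with hcj
  have hine : ci ≠ cj := by
    intro he
    exact hij (Fin.ext (by
      have := congrArg (fun x : Fin (α+n) => (x:ℕ)) he
      simpa [hci, hcj, val_castAdd] using this))
  have hTi : (Equiv.swap ci a0 * Equiv.swap cj a1) ci = a0 := by
    rw [Perm.mul_apply, Equiv.swap_apply_of_ne_of_ne hine
      (by intro he; rw [hci] at he; have := congrArg (fun x : Fin (α+n) => (x:ℕ)) he;
          simp [val_castAdd, ha1] at this; omega),
      Equiv.swap_apply_left]
  have hTj : (Equiv.swap ci a0 * Equiv.swap cj a1) cj = a1 := by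
    rw [Perm.mul_apply, Equiv.swap_apply_left, Equiv.swap_apply_of_ne_of_ne
      (by intro he; have := congrArg (fun x : Fin (α+n) => (x:ℕ)) he;
          simp [ha1, hci, val_castAdd] at this; omega)
      (by intro he; have := congrArg (fun x : Fin (α+n) => (x:ℕ)) he;
          simp [ha1, ha0] at this)]
  have hTo : ∀ x : Fin (α+n), (x:ℕ) < α → x ≠ ci → x ≠ cj →
      (Equiv.swap ci a0 * Equiv.swap cj a1) x = x := by
    intro x hx h1 h2
    rw [Perm.mul_apply, Equiv.swap_apply_of_ne_of_ne h2
      (by intro he; rw [he] at hx; simp [ha1] at hx),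
      Equiv.swap_apply_of_ne_of_ne h1
      (by intro he; rw [he] at hx; simp [ha0] at hx)]
  have key := filter_conj_card α n (Equiv.swap ci a0 * Equiv.swap cj a1) (α+2) (by omega) ?_
  · rw [key]
    congr 1
    omega
  · intro c hc
    rw [mem_fixFirst] at hc
    constructor
    · intro h x hx
      rcases Nat.lt_or_ge (x:ℕ) α with hxa | hxa
      · exact hc x hxa
      · rcases Nat.lt_or_ge (x:ℕ) (α+1) with hxb | hxb
        · have hxe : x = a0 := Fin.ext (by simp only [ha0]; omega)
          have hi := h ci (by simp [hci, val_castAdd])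
          rw [hTi] at hi
          rw [hxe]; exact hi
        · have hxe : x = a1 := Fin.ext (by simp only [ha1]; omega)
          have hj := h cj (by simp [hcj, val_castAdd])
          rw [hTj] at hj
          rw [hxe]; exact hj
    · intro h x hx
      by_cases hx1 : x = ci
      · rw [hx1, hTi]
        exact h a0 (by simp [ha0])
      · by_cases hx2 : x = cj
        · rw [hx2, hTj]
          exact h a1 (by simp [ha1])
        · rw [hTo x hx hx1 hx2]
          exact h x (by omega)

lemma m_mid (hn : 2 ≤ n) :
    ((Kf α n).filter (fun k => k (⟨α, ltA hn⟩ : Fin (α+n)) = ⟨α, ltA hn⟩)).card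
      = (n-1).factorial := by
  set a0 : Fin (α+n) := ⟨α, ltA hn⟩ with ha0
  have hset : (Kf α n).filter (fun k => k a0 = a0)
      = (Set.toFinite ((fixingSubgroup (Perm (Fin (α+n)))
          {x : Fin (α+n) | (x:ℕ) < α+1} : Subgroup _) : Set _)).toFinset := by
    ext c
    rw [Finset.mem_filter, Set.Finite.mem_toFinset, SetLike.mem_coe, mem_fixingSubgroup_iff,
      mem_Kf]
    constructor
    · rintro ⟨h1, h2⟩ x hx
      have hx' : (x:ℕ) < α + 1 := hx
      rcases Nat.lt_or_ge (x:ℕ) α with hxa | hxa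
      · exact h1 x hxa
      · have hxe : x = a0 := Fin.ext (by simp only [ha0]; omega)
        rw [hxe]; exact h2
    · intro h
      refine ⟨fun x hx => h x (show (x:ℕ) < α+1 by omega), h a0 (by simp [ha0])⟩
  rw [hset, card_finite_toFinset, card_fixLt]
  congr 1
  omega

lemma fin_ne_of_val {x y : Fin (α+n)} (h : (x:ℕ) ≠ (y:ℕ)) : x ≠ y :=
  fun he => h (by rw [he])

lemma stilde_lt (g : Perm (Fin α)) (x : Fin (α+n)) (hx : (x:ℕ) < α) :
    Perm.viaFintypeEmbedding g (Fin.castAddEmb n) x = Fin.castAdd n (g ⟨x, hx⟩) := by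
  have key := Perm.viaFintypeEmbedding_apply_image (e := g) (f := Fin.castAddEmb n) ⟨(x:ℕ), hx⟩
  have hxx : (Fin.castAddEmb n) ⟨(x:ℕ), hx⟩ = x := Fin.ext rfl
  rw [hxx] at key
  exact key

lemma stilde_ge (g : Perm (Fin α)) (x : Fin (α+n)) (hx : α ≤ (x:ℕ)) :
    Perm.viaFintypeEmbedding g (Fin.castAddEmb n) x = x := by
  apply Perm.viaFintypeEmbedding_apply_notMem_range
  rintro ⟨y, rfl⟩
  have : ((Fin.castAddEmb n y : Fin (α+n)) : ℕ) = (y : ℕ) := rfl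
  omega

lemma sigma_ge {σ : Perm (Fin (α+n))} (hσ : σ ∈ fixFirst α n) (x : Fin (α+n))
    (hx : α ≤ (x:ℕ)) : α ≤ ((σ x : Fin (α+n)) : ℕ) := by
  by_contra hlt
  rw [mem_fixFirst] at hσ
  have h1 : σ (σ x) = σ x := hσ (σ x) (by omega)
  have h2 : σ x = x := σ.injective h1
  omega

lemma stilde_comm (g : Perm (Fin α)) {σ : Perm (Fin (α+n))} (hσ : σ ∈ fixFirst α n) :
    σ * Perm.viaFintypeEmbedding g (Fin.castAddEmb n)
      = Perm.viaFintypeEmbedding g (Fin.castAddEmb n) * σ := by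
  have hσ' := (mem_fixFirst α n).mp hσ
  ext x
  rw [Perm.mul_apply, Perm.mul_apply]
  rcases Nat.lt_or_ge (x:ℕ) α with hx | hx
  · rw [hσ' x hx, stilde_lt g x hx]
    exact congrArg Fin.val (hσ' _ (by rw [val_castAdd]; exact (g ⟨x, hx⟩).isLt))
  · rw [stilde_ge g x hx, stilde_ge g (σ x) (sigma_ge hσ x hx)]

lemma unitK_comm_stilde (g : Perm (Fin α)) :
    unitK α n * MonoidAlgebra.single (Perm.viaFintypeEmbedding g (Fin.castAddEmb n)) (1:ℂ)
      = MonoidAlgebra.single (Perm.viaFintypeEmbedding g (Fin.castAddEmb n)) (1:ℂ) *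
          unitK α n := by
  rw [unitK, smul_mul_assoc, mul_smul_comm, Finset.sum_mul, Finset.mul_sum]
  congr 1
  refine Finset.sum_congr rfl (fun σ hσ => ?_)
  rw [MonoidAlgebra.single_mul_single, MonoidAlgebra.single_mul_single, one_mul]
  rw [stilde_comm g ((mem_Kf_iff α n).mp (by exact hσ))]

lemma Umul (aa bb : Perm (Fin (α+n))) :
    (unitK α n * MonoidAlgebra.single aa (1:ℂ) * unitK α n) *
      (unitK α n * MonoidAlgebra.single bb (1:ℂ) * unitK α n) =
    ((n.factorial : ℂ))⁻¹ • ∑ k ∈ Kf α n,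
      (unitK α n * MonoidAlgebra.single (aa * k * bb) (1:ℂ) * unitK α n) := by
  have h1 : (unitK α n * MonoidAlgebra.single aa (1:ℂ) * unitK α n) *
      (unitK α n * MonoidAlgebra.single bb (1:ℂ) * unitK α n)
      = unitK α n * MonoidAlgebra.single aa (1:ℂ) * unitK α n *
          MonoidAlgebra.single bb (1:ℂ) * unitK α n := by
    calc (unitK α n * MonoidAlgebra.single aa (1:ℂ) * unitK α n) *
        (unitK α n * MonoidAlgebra.single bb (1:ℂ) * unitK α n)
        = unitK α n * MonoidAlgebra.single aa (1:ℂ) * (unitK α n * unitK α n) *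
            MonoidAlgebra.single bb (1:ℂ) * unitK α n := by simp only [mul_assoc]
      _ = _ := by rw [unitK_sq]
  rw [h1]
  nth_rewrite 2 [show unitK α n = ((n.factorial : ℂ))⁻¹ •
    ∑ σ ∈ Kf α n, MonoidAlgebra.single σ (1:ℂ) from rfl]
  rw [mul_smul_comm, smul_mul_assoc, smul_mul_assoc]
  refine congrArg (_ • ·) ?_
  rw [Finset.mul_sum, Finset.sum_mul, Finset.sum_mul]
  refine Finset.sum_congr rfl (fun k hk => ?_)
  rw [mul_assoc (unitK α n), MonoidAlgebra.single_mul_single, one_mul,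
    mul_assoc (unitK α n), MonoidAlgebra.single_mul_single, one_mul]

lemma aElt_eq (g : Perm (Fin α)) :
    aElt α n g
      = MonoidAlgebra.single (Perm.viaFintypeEmbedding g (Fin.castAddEmb n)) (1:ℂ) *
          unitK α n := by
  rw [aElt, unitK, mul_smul_comm, Finset.mul_sum]
  congr 1
  refine Finset.sum_congr rfl (fun σ hσ => ?_)
  rw [MonoidAlgebra.single_mul_single, one_mul]

lemma stilde_castAdd (g : Perm (Fin α)) (y : Fin α) :
    Perm.viaFintypeEmbedding g (Fin.castAddEmb n) (Fin.castAdd n y) = Fin.castAdd n (g y) :=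
  Perm.viaFintypeEmbedding_apply_image (e := g) (f := Fin.castAddEmb n) y

lemma castAdd_inj {y z : Fin α} (h : (Fin.castAdd n y : Fin (α+n)) = Fin.castAdd n z) :
    y = z := by
  apply Fin.ext
  have := congrArg (fun x : Fin (α+n) => (x:ℕ)) h
  simpa [val_castAdd] using this

lemma sandwich_k (hn : 2 ≤ n) (i j : Fin α) (hij : i ≠ j) {k : Perm (Fin (α+n))}
    (hk : k ∈ fixFirst α n) :
    unitK α n * MonoidAlgebra.single
        (Equiv.swap (Fin.castAdd n j) (⟨α, ltA hn⟩ : Fin (α+n)) * k *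
          Equiv.swap (Fin.castAdd n i) ⟨α, ltA hn⟩) (1:ℂ) * unitK α n =
      if k ⟨α, ltA hn⟩ = (⟨α, ltA hn⟩ : Fin (α+n)) then
        unitK α n * MonoidAlgebra.single
          (Perm.viaFintypeEmbedding (Equiv.swap i j) (Fin.castAddEmb n) *
            Equiv.swap (Fin.castAdd n j) ⟨α, ltA hn⟩) 1 * unitK α n
      else
        unitK α n * MonoidAlgebra.single
          (Equiv.swap (Fin.castAdd n i) ⟨α, ltA hn⟩ *
            Equiv.swap (Fin.castAdd n j) ⟨α+1, ltA1 hn⟩) 1 * unitK α n := by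
  set a0 : Fin (α+n) := ⟨α, ltA hn⟩ with ha0
  set a1 : Fin (α+n) := ⟨α+1, ltA1 hn⟩ with ha1
  set ci : Fin (α+n) := Fin.castAdd n i with hci
  set cj : Fin (α+n) := Fin.castAdd n j with hcj
  set s : Perm (Fin (α+n)) := Perm.viaFintypeEmbedding (Equiv.swap i j) (Fin.castAddEmb n)
    with hs
  set tj : Perm (Fin (α+n)) := Equiv.swap cj a0 with htj
  set ti : Perm (Fin (α+n)) := Equiv.swap ci a0 with hti
  have hvi : (ci : ℕ) = (i : ℕ) := rfl
  have hvj : (cj : ℕ) = (j : ℕ) := rfl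
  have hva0 : (a0 : ℕ) = α := rfl
  have hva1 : (a1 : ℕ) = α + 1 := rfl
  have hilt : (i : ℕ) < α := i.isLt
  have hjlt : (j : ℕ) < α := j.isLt
  have hcicj : ci ≠ cj := fin_ne_of_val (by
    rw [hvi, hvj]
    exact fun he => hij (Fin.ext he))
  have hcia0 : ci ≠ a0 := fin_ne_of_val (by omega)
  have hcja0 : cj ≠ a0 := fin_ne_of_val (by omega)
  have hcia1 : ci ≠ a1 := fin_ne_of_val (by omega)
  have hcja1 : cj ≠ a1 := fin_ne_of_val (by omega)
  have ha0a1 : a0 ≠ a1 := fin_ne_of_val (by omega)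
  have hk' := (mem_fixFirst α n).mp hk
  have hkinv := (mem_fixFirst α n).mp ((fixFirst α n).inv_mem hk)
  -- evaluation of s on first-block points
  have hsci : s ci = cj := by
    rw [hs, hci, stilde_castAdd, Equiv.swap_apply_left, hcj]
  have hscj : s cj = ci := by
    rw [hs, hcj, stilde_castAdd, Equiv.swap_apply_right, hci]
  have hsfix : ∀ x : Fin (α+n), (x:ℕ) < α → x ≠ ci → x ≠ cj → s x = x := by
    intro x hx h1 h2
    rw [hs, stilde_lt _ x hx, Equiv.swap_apply_of_ne_of_ne
      (fun he => h1 (by rw [hci, ← he]; exact (Fin.ext rfl : x = _)))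
      (fun he => h2 (by rw [hcj, ← he]; exact (Fin.ext rfl : x = _)))]
    exact (Fin.ext rfl : _ = x)
  have hginv : (tj * k * ti)⁻¹ = ti * k⁻¹ * tj := by
    rw [mul_inv_rev, mul_inv_rev, htj, hti, Equiv.swap_inv, Equiv.swap_inv, mul_assoc]
  by_cases h0 : k a0 = a0
  · rw [if_pos h0]
    have hk0 : k⁻¹ a0 = a0 := by
      conv_lhs => rw [← h0]
      exact k.symm_apply_apply _
    refine sandwich_eq α n ((s * tj * (tj * k * ti)⁻¹)⁻¹) 1 ?_ ?_
      (by simp only [htj, hti, hs]; group)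
    · rw [mem_Kf_iff]
      refine (fixFirst α n).inv_mem ?_
      rw [mem_fixFirst]
      intro x hx
      rw [hginv]
      simp only [Perm.mul_apply, htj, hti]
      by_cases hx1 : x = ci
      · rw [hx1]
        rw [show (Equiv.swap cj a0) ci = ci from Equiv.swap_apply_of_ne_of_ne hcicj hcia0]
        rw [hkinv ci (by omega)]
        rw [show (Equiv.swap ci a0) ci = a0 from Equiv.swap_apply_left _ _]
        rw [show (Equiv.swap cj a0) a0 = cj from Equiv.swap_apply_right _ _]
        exact hscj
      · by_cases hx2 : x = cj
        · rw [hx2]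
          rw [show (Equiv.swap cj a0) cj = a0 from Equiv.swap_apply_left _ _]
          rw [hk0]
          rw [show (Equiv.swap ci a0) a0 = ci from Equiv.swap_apply_right _ _]
          rw [show (Equiv.swap cj a0) ci = ci from Equiv.swap_apply_of_ne_of_ne hcicj hcia0]
          exact hsci
        · rw [show (Equiv.swap cj a0) x = x from Equiv.swap_apply_of_ne_of_ne hx2
            (fin_ne_of_val (by rw [hva0]; omega))]
          rw [hkinv x (by omega)]
          rw [show (Equiv.swap ci a0) x = x from Equiv.swap_apply_of_ne_of_ne hx1
            (fin_ne_of_val (by rw [hva0]; omega))]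
          rw [show (Equiv.swap cj a0) x = x from Equiv.swap_apply_of_ne_of_ne hx2
            (fin_ne_of_val (by rw [hva0]; omega))]
          exact hsfix x hx hx1 hx2
    · rw [mem_Kf_iff]
      exact (fixFirst α n).one_mem
  · rw [if_neg h0]
    set y : Fin (α+n) := k⁻¹ a0 with hy
    have hky : k y = a0 := by rw [hy]; exact k.apply_symm_apply _
    have hyge : α ≤ (y:ℕ) := by
      by_contra hlt
      push_neg at hlt
      have h1 := hk' y (by omega)
      rw [hky] at h1
      have h2 := congrArg Fin.val h1
      rw [hva0] at h2
      omega
    have hyne0 : y ≠ a0 := by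
      intro he
      rw [he] at hky
      exact h0 hky
    have hynci : y ≠ ci := fin_ne_of_val (by omega)
    have hyncj : y ≠ cj := fin_ne_of_val (by omega)
    set T : Perm (Fin (α+n)) := Equiv.swap ci a0 * Equiv.swap cj a1 with hT
    set k2 : Perm (Fin (α+n)) := Equiv.swap a1 y with hk2
    have hk2mem : k2 ∈ fixFirst α n := by
      rw [mem_fixFirst]
      intro x hx
      rw [hk2, Equiv.swap_apply_of_ne_of_ne (fin_ne_of_val (by rw [hva1]; omega))
        (fin_ne_of_val (by omega))]
    have hk2' := (mem_fixFirst α n).mp hk2mem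
    have hk2a0 : k2 a0 = a0 := by
      rw [hk2, Equiv.swap_apply_of_ne_of_ne ha0a1 hyne0.symm]
    have hk2y : k2 y = a1 := by rw [hk2, Equiv.swap_apply_right]
    have hTa0 : T a0 = ci := by
      rw [hT, Perm.mul_apply,
        show (Equiv.swap cj a1) a0 = a0 from Equiv.swap_apply_of_ne_of_ne hcja0.symm ha0a1,
        show (Equiv.swap ci a0) a0 = ci from Equiv.swap_apply_right _ _]
    have hTa1 : T a1 = cj := by
      rw [hT, Perm.mul_apply,
        show (Equiv.swap cj a1) a1 = cj from Equiv.swap_apply_right _ _,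
        show (Equiv.swap ci a0) cj = cj from Equiv.swap_apply_of_ne_of_ne hcicj.symm hcja0]
    have hTx : ∀ x : Fin (α+n), (x:ℕ) < α → x ≠ ci → x ≠ cj → T x = x := by
      intro x hx h1 h2
      rw [hT, Perm.mul_apply,
        Equiv.swap_apply_of_ne_of_ne h2 (fin_ne_of_val (by rw [hva1]; omega)),
        Equiv.swap_apply_of_ne_of_ne h1 (fin_ne_of_val (by rw [hva0]; omega))]
    refine sandwich_eq α n ((T * k2 * (tj * k * ti)⁻¹)⁻¹) k2 ?_ ((mem_Kf_iff α n).mpr hk2mem)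
      (by simp only [hT, hk2, htj, hti]; group)
    rw [mem_Kf_iff]
    refine (fixFirst α n).inv_mem ?_
    rw [mem_fixFirst]
    intro x hx
    rw [hginv]
    simp only [Perm.mul_apply, htj, hti]
    by_cases hx1 : x = ci
    · rw [hx1]
      rw [show (Equiv.swap cj a0) ci = ci from Equiv.swap_apply_of_ne_of_ne hcicj hcia0]
      rw [hkinv ci (by omega)]
      rw [show (Equiv.swap ci a0) ci = a0 from Equiv.swap_apply_left _ _]
      rw [hk2a0, hTa0]
    · by_cases hx2 : x = cj
      · rw [hx2]
        rw [show (Equiv.swap cj a0) cj = a0 from Equiv.swap_apply_left _ _]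
        rw [show k⁻¹ a0 = y from hy.symm]
        rw [show (Equiv.swap ci a0) y = y from Equiv.swap_apply_of_ne_of_ne hynci hyne0]
        rw [hk2y, hTa1]
      · rw [show (Equiv.swap cj a0) x = x from Equiv.swap_apply_of_ne_of_ne hx2
          (fin_ne_of_val (by rw [hva0]; omega))]
        rw [hkinv x (by omega)]
        rw [show (Equiv.swap ci a0) x = x from Equiv.swap_apply_of_ne_of_ne hx1
          (fin_ne_of_val (by rw [hva0]; omega))]
        rw [hk2' x hx, hTx x hx hx1 hx2]

end Spec

/-- In `C[S_n\S_{α+n}/S_n]` (with `n ≥ 2`), for distinct `i, j ≤ α` one has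
`θ_j·θ_i = θ_{ij} + a((i j))·θ_j`, where `θ_{ij}` is `(1/n!)` times the sum of
delta functions over the double coset of `T_{ij} = (i,α+1)(j,α+2)`, whose
`α`-corner is the partial identity vanishing exactly at `i` and `j`. -/
theorem theta_mul (α n : ℕ) (hn : 2 ≤ n) (i j : Fin α) (hij : i ≠ j) :
    theta α n (by omega) j * theta α n (by omega) i =
      dosetElt α n
          (Equiv.swap (Fin.castAdd n i) ⟨α, by omega⟩ *
            Equiv.swap (Fin.castAdd n j) ⟨α + 1, by omega⟩) +
        aElt α n (Equiv.swap i j) * theta α n (by omega) j := by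
  classical
  have hα : α < α + n := by omega
  have hα1 : α + 1 < α + n := by omega
  show dosetElt α n (Equiv.swap (Fin.castAdd n j) ⟨α, hα⟩) *
      dosetElt α n (Equiv.swap (Fin.castAdd n i) ⟨α, hα⟩) =
    dosetElt α n (Equiv.swap (Fin.castAdd n i) ⟨α, hα⟩ *
        Equiv.swap (Fin.castAdd n j) ⟨α+1, hα1⟩) +
      aElt α n (Equiv.swap i j) * dosetElt α n (Equiv.swap (Fin.castAdd n j) ⟨α, hα⟩)
  have hF : ((n.factorial : ℂ)) ≠ 0 := hnfac n
  have hF1 : (((n-1).factorial : ℂ)) ≠ 0 :=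
    Nat.cast_ne_zero.mpr (Nat.factorial_ne_zero _)
  have hF2 : (((n-2).factorial : ℂ)) ≠ 0 :=
    Nat.cast_ne_zero.mpr (Nat.factorial_ne_zero _)
  -- sandwich forms
  have hXj := dosetElt_eq α n (Equiv.swap (Fin.castAdd n j) ⟨α, hα⟩)
  rw [m_tj hn j] at hXj
  have hXi := dosetElt_eq α n (Equiv.swap (Fin.castAdd n i) ⟨α, hα⟩)
  rw [m_tj hn i] at hXi
  have hXT := dosetElt_eq α n (Equiv.swap (Fin.castAdd n i) ⟨α, hα⟩ *
    Equiv.swap (Fin.castAdd n j) ⟨α+1, hα1⟩)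
  rw [m_T hn i j hij] at hXT
  -- invert
  have invert : ∀ (c : ℂ) (X D : MonoidAlgebra ℂ (Perm (Fin (α+n)))),
      c ≠ 0 → X = c • D → D = c⁻¹ • X := by
    intro c X D hc hXD
    rw [hXD, smul_smul, inv_mul_cancel₀ hc, one_smul]
  have hDj := invert _ _ _ (div_ne_zero hF1 hF) hXj
  have hDi := invert _ _ _ (div_ne_zero hF1 hF) hXi
  have hDT := invert _ _ _ (div_ne_zero hF2 hF) hXT
  rw [hDj, hDi, hDT]
  -- a-term
  have haθ : aElt α n (Equiv.swap i j) *
      ((((n-1).factorial : ℂ)/n.factorial)⁻¹ •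
        (unitK α n * MonoidAlgebra.single (Equiv.swap (Fin.castAdd n j) ⟨α, hα⟩) 1 *
          unitK α n))
      = (((n-1).factorial : ℂ)/n.factorial)⁻¹ •
        (unitK α n * MonoidAlgebra.single
          (Perm.viaFintypeEmbedding (Equiv.swap i j) (Fin.castAddEmb n) *
            Equiv.swap (Fin.castAdd n j) ⟨α, hα⟩) 1 * unitK α n) := by
    rw [aElt_eq, mul_smul_comm]
    congr 1
    calc MonoidAlgebra.single (Perm.viaFintypeEmbedding (Equiv.swap i j) (Fin.castAddEmb n))
          (1:ℂ) * unitK α n *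
        (unitK α n * MonoidAlgebra.single (Equiv.swap (Fin.castAdd n j) ⟨α, hα⟩) 1 *
          unitK α n)
        = MonoidAlgebra.single (Perm.viaFintypeEmbedding (Equiv.swap i j) (Fin.castAddEmb n))
            (1:ℂ) * (unitK α n * unitK α n) *
            MonoidAlgebra.single (Equiv.swap (Fin.castAdd n j) ⟨α, hα⟩) 1 * unitK α n := by
          simp only [mul_assoc]
      _ = MonoidAlgebra.single (Perm.viaFintypeEmbedding (Equiv.swap i j) (Fin.castAddEmb n))
            (1:ℂ) * unitK α n *
            MonoidAlgebra.single (Equiv.swap (Fin.castAdd n j) ⟨α, hα⟩) 1 * unitK α n := by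
          rw [unitK_sq]
      _ = unitK α n * MonoidAlgebra.single
            (Perm.viaFintypeEmbedding (Equiv.swap i j) (Fin.castAddEmb n)) (1:ℂ) *
            MonoidAlgebra.single (Equiv.swap (Fin.castAdd n j) ⟨α, hα⟩) 1 * unitK α n := by
          rw [unitK_comm_stilde]
      _ = unitK α n * MonoidAlgebra.single
            (Perm.viaFintypeEmbedding (Equiv.swap i j) (Fin.castAddEmb n) *
              Equiv.swap (Fin.castAdd n j) ⟨α, hα⟩) (1:ℂ) * unitK α n := by
          rw [mul_assoc (unitK α n), MonoidAlgebra.single_mul_single, one_mul]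
  rw [haθ]
  -- product expansion
  rw [smul_mul_smul_comm, Umul]
  -- split the sum
  have hsplit : ∑ k ∈ Kf α n,
      (unitK α n * MonoidAlgebra.single
        (Equiv.swap (Fin.castAdd n j) ⟨α, hα⟩ * k * Equiv.swap (Fin.castAdd n i) ⟨α, hα⟩)
        (1:ℂ) * unitK α n)
      = (((n-1).factorial : ℕ) : ℂ) •
          (unitK α n * MonoidAlgebra.single
            (Perm.viaFintypeEmbedding (Equiv.swap i j) (Fin.castAddEmb n) *
              Equiv.swap (Fin.castAdd n j) ⟨α, hα⟩) 1 * unitK α n)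
        + ((n.factorial - (n-1).factorial : ℕ) : ℂ) •
          (unitK α n * MonoidAlgebra.single
            (Equiv.swap (Fin.castAdd n i) ⟨α, hα⟩ *
              Equiv.swap (Fin.castAdd n j) ⟨α+1, hα1⟩) 1 * unitK α n) := by
    rw [← Finset.sum_filter_add_sum_filter_not (Kf α n)
      (fun k => k ⟨α, hα⟩ = (⟨α, hα⟩ : Fin (α+n)))]
    congr 1
    · rw [Finset.sum_congr rfl (fun k hk => ?_), Finset.sum_const, m_mid hn,
        ← Nat.cast_smul_eq_nsmul ℂ]
      rw [Finset.mem_filter] at hk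
      rw [sandwich_k hn i j hij ((mem_Kf_iff α n).mp hk.1), if_pos hk.2]
    · have hcards : ((Kf α n).filter
          (fun k => ¬ k ⟨α, hα⟩ = (⟨α, hα⟩ : Fin (α+n)))).card
          = n.factorial - (n-1).factorial := by
        have h1 := Finset.card_filter_add_card_filter_not
          (s := Kf α n) (p := fun k => k ⟨α, hα⟩ = (⟨α, hα⟩ : Fin (α+n)))
        rw [card_Kf, m_mid hn] at h1
        omega
      rw [Finset.sum_congr rfl (fun k hk => ?_), Finset.sum_const, hcards,
        ← Nat.cast_smul_eq_nsmul ℂ]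
      rw [Finset.mem_filter] at hk
      rw [sandwich_k hn i j hij ((mem_Kf_iff α n).mp hk.1), if_neg hk.2]
  rw [hsplit]
  -- scalar arithmetic
  have hfac1 : (n.factorial : ℂ) = n * ((n-1).factorial : ℂ) := by
    exact_mod_cast (Nat.mul_factorial_pred (n := n) (by omega)).symm
  have hfac2 : ((n-1).factorial : ℂ) = ((n-1 : ℕ) : ℂ) * ((n-2).factorial : ℂ) := by
    have h9 : (n-1) * (n-2).factorial = (n-1).factorial := by
      have h8 := Nat.mul_factorial_pred (n := n-1) (by omega)
      rw [show n - 1 - 1 = n - 2 by omega] at h8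
      exact h8
    exact_mod_cast h9.symm
  have hle : (n-1).factorial ≤ n.factorial := Nat.factorial_le (by omega)
  have hsub : ((n.factorial - (n-1).factorial : ℕ) : ℂ)
      = (n.factorial : ℂ) - ((n-1).factorial : ℂ) := Nat.cast_sub hle
  have hc : ((n-1 : ℕ) : ℂ) = (n : ℂ) - 1 := by
    have : ((1:ℕ):ℂ) = (1:ℂ) := by norm_num
    rw [Nat.cast_sub (by omega), this]
  have hn1 : ((n : ℂ)) ≠ 0 := Nat.cast_ne_zero.mpr (by omega)
  have hn2 : ((n : ℂ)) - 1 ≠ 0 := by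
    rw [← hc]
    exact Nat.cast_ne_zero.mpr (by omega)
  rw [hsub]
  match_scalars
  · simp only [inv_div]
    rw [hfac1, hfac2, hc]
    field_simp
  · simp only [inv_div]
    rw [hfac1, hfac2, hc]
    field_simp
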